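/- For every nonempty finite shape X ⊆ ℤ², the full grid graph on the 2-scaling X² of X contains a Hamiltonian cycle. -/

import Mathlib

/-- The set of unit vectors in ℤ². -/
def unitVectors : Set (ℤ × ℤ) := {(0, 1), (1, 0), (0, -1), (-1, 0)}

/-- The full grid graph on a set `V ⊆ ℤ²`: vertices are the points of `V`,
with an edge between `a` and `b` exactly when `a - b` is a unit vector. -/
def fullGridGraph (V : Set (ℤ × ℤ)) : SimpleGraph V :=
  SimpleGraph.fromRel (fun a b => (a : ℤ × ℤ) - (b : ℤ × ℤ) ∈ unitVectors)

/-- A shape is a set of points of ℤ² whose full grid graph is connected. -/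
def IsShape (X : Set (ℤ × ℤ)) : Prop := (fullGridGraph X).Connected

/-- The `c`-scaling of `X ⊆ ℤ²`: all points whose coordinatewise floor-division
by `c` lands in `X`. -/
def scale (c : ℕ) (X : Set (ℤ × ℤ)) : Set (ℤ × ℤ) :=
  {p : ℤ × ℤ | (Int.fdiv p.1 (c : ℤ), Int.fdiv p.2 (c : ℤ)) ∈ X}

open SimpleGraph Walk

set_option linter.unusedSectionVars false

namespace GridHam


lemma mem_unitVectors (d : ℤ × ℤ) :
    d ∈ unitVectors ↔ d = (0,1) ∨ d = (1,0) ∨ d = (0,-1) ∨ d = (-1,0) := by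
  simp [unitVectors]

lemma fdiv_two (z : ℤ) : Int.fdiv z 2 = z / 2 := Int.fdiv_eq_ediv_of_nonneg z (by norm_num)

lemma mem_scale2 {X : Set (ℤ × ℤ)} (z : ℤ × ℤ) :
    z ∈ scale 2 X ↔ (z.1 / 2, z.2 / 2) ∈ X := by
  simp [scale, fdiv_two]

lemma scale2_fdiv_mem {X : Set (ℤ × ℤ)} {z : ℤ × ℤ} (hz : z ∈ scale 2 X) :
    (z.1 / 2, z.2 / 2) ∈ X := (mem_scale2 z).mp hz

lemma grid_adj {V : Set (ℤ × ℤ)} {a b : V}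
    (h : (a : ℤ × ℤ) - b ∈ unitVectors ∨ (b : ℤ × ℤ) - a ∈ unitVectors) :
    (fullGridGraph V).Adj a b := by
  have hne : a ≠ b := by
    rintro rfl
    rcases h with h | h <;>
      · rw [sub_self, mem_unitVectors] at h
        rcases h with h | h | h | h <;> simp [Prod.ext_iff] at h
  exact (SimpleGraph.fromRel_adj _ _ _).mpr ⟨hne, h⟩

def incHom {A B : Set (ℤ × ℤ)} (h : A ⊆ B) : fullGridGraph A →g fullGridGraph B where
  toFun := Set.inclusion h
  map_rel' := by
    intro a b hab
    rw [fullGridGraph, SimpleGraph.fromRel_adj] at hab ⊢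
    exact ⟨fun he => hab.1 (Set.inclusion_injective h he), hab.2⟩

def faceL (x d : ℤ × ℤ) : ℤ × ℤ := (2*x.1 + d.1*(d.1+1)/2, 2*x.2 + d.2*(d.2+1)/2)
def faceR (x d : ℤ × ℤ) : ℤ × ℤ := (2*x.1 + d.1*(d.1+1)/2 + d.2^2, 2*x.2 + d.2*(d.2+1)/2 + d.1^2)
def face (x d : ℤ × ℤ) : Sym2 (ℤ × ℤ) := s(faceL x d, faceR x d)

lemma face_inj {x y d e : ℤ × ℤ} (hd : d ∈ unitVectors) (he : e ∈ unitVectors)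
    (h : face x d = face y e) : x = y ∧ d = e := by
  rw [mem_unitVectors] at hd he
  obtain ⟨x1, x2⟩ := x
  obtain ⟨y1, y2⟩ := y
  rcases hd with rfl | rfl | rfl | rfl <;> rcases he with rfl | rfl | rfl | rfl <;>
    · simp only [face, faceL, faceR, Sym2.eq_iff, Prod.mk.injEq] at h ⊢
      norm_num at h ⊢
      omega

lemma neg_mem_unitVectors {d : ℤ × ℤ} (hd : d ∈ unitVectors) : -d ∈ unitVectors := by
  rw [mem_unitVectors] at hd ⊢
  rcases hd with rfl | rfl | rfl | rfl <;> norm_num [Prod.ext_iff]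

lemma unit_add_ne {q d : ℤ × ℤ} (hd : d ∈ unitVectors) : q ≠ q + d := by
  rw [mem_unitVectors] at hd
  obtain ⟨q1, q2⟩ := q
  rcases hd with rfl | rfl | rfl | rfl <;> simp [Prod.ext_iff]

lemma fdiv_face_facts {q : ℤ × ℤ} {d : ℤ × ℤ} (hd : d ∈ unitVectors) :
    ((faceL q d).1/2, (faceL q d).2/2) = q ∧ ((faceR q d).1/2, (faceR q d).2/2) = q ∧
    ((faceL q d + d).1/2, (faceL q d + d).2/2) = q + d ∧
    ((faceR q d + d).1/2, (faceR q d + d).2/2) = q + d ∧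
    ((faceL q d + d + d).1/2, (faceL q d + d + d).2/2) = q + d ∧
    ((faceR q d + d + d).1/2, (faceR q d + d + d).2/2) = q + d := by
  rw [mem_unitVectors] at hd
  obtain ⟨q1, q2⟩ := q
  rcases hd with rfl | rfl | rfl | rfl <;>
    · norm_num [faceL, faceR, Prod.ext_iff]
      omega

lemma block_distinct {q : ℤ × ℤ} {d : ℤ × ℤ} (hd : d ∈ unitVectors) :
    faceL q d ≠ faceR q d ∧
    faceL q d + d ≠ faceL q d + d + d ∧ faceL q d + d ≠ faceR q d + d + d ∧
    faceL q d + d ≠ faceR q d + d ∧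
    faceL q d + d + d ≠ faceR q d + d + d ∧ faceL q d + d + d ≠ faceR q d + d ∧
    faceR q d + d + d ≠ faceR q d + d := by
  rw [mem_unitVectors] at hd
  obtain ⟨q1, q2⟩ := q
  rcases hd with rfl | rfl | rfl | rfl <;>
    · norm_num [faceL, faceR, Prod.ext_iff]
      try omega

lemma cells_covered {q : ℤ × ℤ} {d : ℤ × ℤ} (hd : d ∈ unitVectors) {z : ℤ × ℤ}
    (hz : (z.1/2, z.2/2) = q + d) :
    z = faceL q d + d ∨ z = faceL q d + d + d ∨ z = faceR q d + d + d ∨ z = faceR q d + d := by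
  rw [mem_unitVectors] at hd
  obtain ⟨q1, q2⟩ := q
  obtain ⟨z1, z2⟩ := z
  rcases hd with rfl | rfl | rfl | rfl <;>
    · norm_num [faceL, faceR, Prod.ext_iff] at hz ⊢
      omega

lemma face_p_cases {q : ℤ × ℤ} {d0 d : ℤ × ℤ} (hd0 : d0 ∈ unitVectors)
    (hd : d ∈ unitVectors) (hne : d ≠ -d0) :
    face (q + d0) d = s(faceL q d0 + d0, faceL q d0 + d0 + d0) ∨
    face (q + d0) d = s(faceL q d0 + d0 + d0, faceR q d0 + d0 + d0) ∨
    face (q + d0) d = s(faceR q d0 + d0 + d0, faceR q d0 + d0) := by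
  rw [mem_unitVectors] at hd0 hd
  obtain ⟨q1, q2⟩ := q
  rcases hd0 with rfl | rfl | rfl | rfl <;> rcases hd with rfl | rfl | rfl | rfl <;>
    first
      | (exact absurd rfl hne)
      | (norm_num [face, faceL, faceR, Sym2.eq_iff, Prod.ext_iff]
         omega)

lemma face_sub {q : ℤ × ℤ} {d : ℤ × ℤ} (hd : d ∈ unitVectors) :
    faceR q d - faceL q d ∈ unitVectors := by
  rw [mem_unitVectors] at hd ⊢
  obtain ⟨q1, q2⟩ := q
  rcases hd with rfl | rfl | rfl | rfl <;> norm_num [faceL, faceR, Prod.ext_iff]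

def Good (X : Set (ℤ × ℤ)) : Prop :=
  ∃ (v : scale 2 X) (w : (fullGridGraph (scale 2 X)).Walk v v),
    w.IsHamiltonianCycle ∧ ∀ x ∈ X, ∀ d ∈ unitVectors, x + d ∉ X →
      face x d ∈ w.edges.map (Sym2.map (Subtype.val : scale 2 X → ℤ × ℤ))

section cyc
variable {α : Type*} [DecidableEq α] {G : SimpleGraph α}

lemma path_first_edge {u v w : α} {p : G.Walk u w} (hp : p.IsPath) (he : s(u,v) ∈ p.edges) :
    ∃ (h : G.Adj u v) (r : G.Walk v w), p = Walk.cons h r := by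
  cases p with
  | nil => simp at he
  | @cons _ y _ h' r =>
    rw [Walk.edges_cons, List.mem_cons] at he
    rcases he with he | he
    · rw [Sym2.eq_iff] at he
      rcases he with ⟨-, rfl⟩ | ⟨rfl, rfl⟩
      · exact ⟨h', r, rfl⟩
      · exact absurd rfl h'.ne
    · exfalso
      have := r.fst_mem_support_of_mem_edges he
      rw [Walk.cons_isPath_iff] at hp
      exact hp.2 this

lemma count_reverse_tail {u : α} (c : G.Walk u u) (z : α) :
    c.reverse.support.tail.count z = c.support.tail.count z := by
  have key : c.reverse.support.count z = c.support.count z := by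
    rw [Walk.support_reverse, List.count_reverse]
  rw [support_eq_cons c, support_eq_cons c.reverse] at key
  simp only [List.count_cons, add_left_inj] at key
  exact key

lemma cycle_at_edge {v0 u v : α} {w : G.Walk v0 v0}
    (hw : w.IsCycle) (hcnt : ∀ z, w.support.tail.count z = 1) (he : s(u,v) ∈ w.edges) :
    ∃ (h : G.Adj u v) (t : G.Walk v u), t.IsPath ∧ s(u,v) ∉ t.edges ∧
      (∀ z, t.support.count z = 1) ∧ (Walk.cons h t).edges.Perm w.edges := by
  have hu : u ∈ w.support := w.fst_mem_support_of_mem_edges he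
  set c := w.rotate u hu with hcdef
  have hc : c.IsCycle := hw.rotate hu
  have hce : c.edges.Perm w.edges := (w.rotate_edges u hu).perm
  have hccnt : ∀ z, c.support.tail.count z = 1 := by
    intro z
    rw [((w.support_rotate u hu).perm).count_eq]
    exact hcnt z
  have he' : s(u,v) ∈ c.edges := hce.mem_iff.mpr he
  clear_value c
  cases c with
  | nil => simp at he'
  | @cons _ y _ h1 t1 =>
    have hdec := (Walk.cons_isCycle_iff t1 h1).mp hc
    rw [Walk.edges_cons, List.mem_cons] at he'
    rcases he' with hee | hee
    · rw [Sym2.eq_iff] at hee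
      rcases hee with ⟨-, rfl⟩ | ⟨rfl, rfl⟩
      · refine ⟨h1, t1, hdec.1, hdec.2, ?_, hce⟩
        intro z
        have := hccnt z
        rwa [Walk.support_cons, List.tail_cons] at this
      · exact absurd rfl h1.ne
    · have ht1rev : t1.reverse.IsPath := hdec.1.reverse
      have herev : s(u,v) ∈ t1.reverse.edges := by
        rw [Walk.edges_reverse, List.mem_reverse]; exact hee
      obtain ⟨h2, r, hr⟩ := path_first_edge ht1rev herev
      have hrev : (Walk.cons h1 t1).reverse
          = Walk.cons h2 (r.append (Walk.cons h1.symm Walk.nil)) := by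
        rw [Walk.reverse_cons, hr, Walk.cons_append]
      set t := r.append (Walk.cons h1.symm Walk.nil) with htdef
      have hcntrev : ∀ z, (Walk.cons h1 t1).reverse.support.tail.count z = 1 := by
        intro z
        rw [count_reverse_tail]
        exact hccnt z
      have hcycrev : (Walk.cons h1 t1).reverse.IsCycle := by
        refine ⟨⟨hc.isCircuit.isTrail.reverse, ?_⟩, ?_⟩
        · intro hnil
          have := congrArg Walk.reverse hnil
          rw [Walk.reverse_reverse] at this
          simp at this
        · rw [List.nodup_iff_count_le_one]
          intro z
          rw [hcntrev z]
      rw [hrev] at hcycrev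
      have hdec2 := (Walk.cons_isCycle_iff _ h2).mp hcycrev
      refine ⟨h2, t, hdec2.1, hdec2.2, ?_, ?_⟩
      · intro z
        have := hcntrev z
        rw [hrev, Walk.support_cons, List.tail_cons] at this
        exact this
      · have heq : (Walk.cons h2 t).edges = (Walk.cons h1 t1).edges.reverse := by
          rw [← hrev, Walk.edges_reverse]
        rw [heq]
        exact (List.reverse_perm _).trans hce

end cyc

lemma step {Y : Set (ℤ × ℤ)} {p q : ℤ × ℤ} (hqY : q ∈ Y) (hpY : p ∉ Y)
    (hd0 : p - q ∈ unitVectors) (hG : Good Y) : Good (insert p Y) := by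
  set X := insert p Y with hXdef
  set d0 := p - q with hd0def
  have hpq : q + d0 = p := by rw [hd0def]; ring
  obtain ⟨v0, w, hw, hface⟩ := hG
  have hYX : scale 2 Y ⊆ scale 2 X := fun z hz => Set.subset_insert p Y hz
  have hpX : p ∈ X := Set.mem_insert p Y
  have hqp : q ≠ p := by rw [← hpq]; exact unit_add_ne hd0
  -- the distinguished edge of the face of `q` towards `p` in the Y-cycle
  have hfe := hface q hqY d0 hd0 (by rw [hpq]; exact hpY)
  have hUVex : ∃ U V : ↥(scale 2 Y), ((U : ℤ × ℤ) = faceL q d0) ∧ ((V : ℤ × ℤ) = faceR q d0)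
      ∧ s(U, V) ∈ w.edges := by
    obtain ⟨e0, he0w, he0⟩ := List.mem_map.mp hfe
    revert he0w he0
    induction e0 using Sym2.ind with
    | _ z1 z2 =>
      intro he0w he0
      rw [Sym2.map_pair_eq, face, Sym2.eq_iff] at he0
      rcases he0 with ⟨h1, h2⟩ | ⟨h1, h2⟩
      · exact ⟨z1, z2, h1, h2, he0w⟩
      · exact ⟨z2, z1, h2, h1, by rwa [Sym2.eq_swap]⟩
  obtain ⟨U, V, hUc, hVc, hUVe⟩ := hUVex
  have hwcnt : ∀ z, w.support.tail.count z = 1 := by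
    intro z
    have h1 := hw.isHamiltonian_tail z
    rw [Walk.support_tail_of_not_nil _ hw.isCycle.not_nil] at h1
    convert h1
  obtain ⟨hUVadj, t, htp, hte, htcnt, htedges⟩ := cycle_at_edge hw.isCycle (fun z => by convert hwcnt z) hUVe
  -- coordinates
  obtain ⟨hfL, hfR, hfA, hfD, hfB, hfC⟩ := fdiv_face_facts (q := q) hd0
  obtain ⟨hLR, hABc, hACc, hADc, hBCc, hBDc, hCDc⟩ := block_distinct (q := q) hd0
  have hmemX : ∀ z : ℤ × ℤ, ((z.1/2, z.2/2) = p) → z ∈ scale 2 X := by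
    intro z hz
    rw [mem_scale2, hz]
    exact hpX
  have hnotY : ∀ z : ℤ × ℤ, ((z.1/2, z.2/2) = p) → z ∉ scale 2 Y := by
    intro z hz h
    have := scale2_fdiv_mem h
    rw [hz] at this
    exact hpY this
  -- subtype vertices
  set ι : fullGridGraph (scale 2 Y) →g fullGridGraph (scale 2 X) := incHom hYX with hι
  set U' : ↥(scale 2 X) := ι U with hU'
  set V' : ↥(scale 2 X) := ι V with hV'
  have hU'c : (U' : ℤ × ℤ) = faceL q d0 := hUc
  have hV'c : (V' : ℤ × ℤ) = faceR q d0 := hVc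
  set A : ↥(scale 2 X) := ⟨faceL q d0 + d0, hmemX _ (hfA.trans hpq)⟩ with hA
  set B : ↥(scale 2 X) := ⟨faceL q d0 + d0 + d0, hmemX _ (hfB.trans hpq)⟩ with hB
  set C : ↥(scale 2 X) := ⟨faceR q d0 + d0 + d0, hmemX _ (hfC.trans hpq)⟩ with hC
  set D : ↥(scale 2 X) := ⟨faceR q d0 + d0, hmemX _ (hfD.trans hpq)⟩ with hD
  -- fdiv data for the six vertices
  have fU : (((U' : ℤ × ℤ)).1/2, ((U' : ℤ × ℤ)).2/2) = q := by rw [hU'c]; exact hfL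
  have fV : (((V' : ℤ × ℤ)).1/2, ((V' : ℤ × ℤ)).2/2) = q := by rw [hV'c]; exact hfR
  have fA : (((A : ℤ × ℤ)).1/2, ((A : ℤ × ℤ)).2/2) = p := hfA.trans hpq
  have fB : (((B : ℤ × ℤ)).1/2, ((B : ℤ × ℤ)).2/2) = p := hfB.trans hpq
  have fC : (((C : ℤ × ℤ)).1/2, ((C : ℤ × ℤ)).2/2) = p := hfC.trans hpq
  have fD : (((D : ℤ × ℤ)).1/2, ((D : ℤ × ℤ)).2/2) = p := hfD.trans hpq
  -- distinctness
  have hsub_ne : ∀ a b : ↥(scale 2 X), (((a : ℤ × ℤ)).1/2, ((a : ℤ × ℤ)).2/2) = q →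
      (((b : ℤ × ℤ)).1/2, ((b : ℤ × ℤ)).2/2) = p → a ≠ b := by
    intro a b h1 h2 hab
    rw [hab] at h1
    exact hqp (h1.symm.trans h2)
  have nUA : U' ≠ A := hsub_ne _ _ fU fA
  have nUB : U' ≠ B := hsub_ne _ _ fU fB
  have nUC : U' ≠ C := hsub_ne _ _ fU fC
  have nUD : U' ≠ D := hsub_ne _ _ fU fD
  have nVA : V' ≠ A := hsub_ne _ _ fV fA
  have nVB : V' ≠ B := hsub_ne _ _ fV fB
  have nVC : V' ≠ C := hsub_ne _ _ fV fC
  have nVD : V' ≠ D := hsub_ne _ _ fV fD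
  have nAB : A ≠ B := fun h => hABc (congrArg Subtype.val h)
  have nAC : A ≠ C := fun h => hACc (congrArg Subtype.val h)
  have nAD : A ≠ D := fun h => hADc (congrArg Subtype.val h)
  have nBC : B ≠ C := fun h => hBCc (congrArg Subtype.val h)
  have nBD : B ≠ D := fun h => hBDc (congrArg Subtype.val h)
  have nCD : C ≠ D := fun h => hCDc (congrArg Subtype.val h)
  have nBA : B ≠ A := nAB.symm
  have nCA : C ≠ A := nAC.symm
  have nDA : D ≠ A := nAD.symm
  have nCB : C ≠ B := nBC.symm
  have nDB : D ≠ B := nBD.symm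
  have nDC : D ≠ C := nCD.symm
  -- adjacencies
  have adjUA : (fullGridGraph (scale 2 X)).Adj U' A := by
    refine grid_adj (Or.inr ?_)
    show faceL q d0 + d0 - (U' : ℤ × ℤ) ∈ unitVectors
    rw [hU'c, add_sub_cancel_left]
    exact hd0
  have adjAB : (fullGridGraph (scale 2 X)).Adj A B := by
    refine grid_adj (Or.inr ?_)
    show faceL q d0 + d0 + d0 - (faceL q d0 + d0) ∈ unitVectors
    rw [add_sub_cancel_left]
    exact hd0
  have adjBC : (fullGridGraph (scale 2 X)).Adj B C := by
    refine grid_adj (Or.inr ?_)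
    show faceR q d0 + d0 + d0 - (faceL q d0 + d0 + d0) ∈ unitVectors
    have : faceR q d0 + d0 + d0 - (faceL q d0 + d0 + d0) = faceR q d0 - faceL q d0 := by ring
    rw [this]
    exact face_sub hd0
  have adjCD : (fullGridGraph (scale 2 X)).Adj C D := by
    refine grid_adj (Or.inl ?_)
    show faceR q d0 + d0 + d0 - (faceR q d0 + d0) ∈ unitVectors
    rw [add_sub_cancel_left]
    exact hd0
  have adjDV : (fullGridGraph (scale 2 X)).Adj D V' := by
    refine grid_adj (Or.inl ?_)
    show faceR q d0 + d0 - (V' : ℤ × ℤ) ∈ unitVectors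
    rw [hV'c, add_sub_cancel_left]
    exact hd0
  -- the mapped path
  set T : (fullGridGraph (scale 2 X)).Walk V' U' := t.map ι with hT
  have hTsup : T.support = t.support.map ι := by rw [hT]; exact Walk.support_map _ _
  have hTedges : T.edges = t.edges.map (Sym2.map ι) := by rw [hT]; exact Walk.edges_map _ _
  have hTsup_val : ∀ zz ∈ T.support, (zz : ℤ × ℤ) ∈ scale 2 Y := by
    intro zz hz
    rw [hTsup] at hz
    obtain ⟨z0, hz0, rfl⟩ := List.mem_map.mp hz
    exact z0.2
  have hInj : Function.Injective (ι : ↥(scale 2 Y) → ↥(scale 2 X)) :=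
    Set.inclusion_injective hYX
  -- the new cycle
  set c2 : (fullGridGraph (scale 2 X)).Walk U' U' :=
    Walk.cons adjUA (Walk.cons adjAB (Walk.cons adjBC (Walk.cons adjCD (Walk.cons adjDV T))))
    with hc2
  have hc2sup : c2.support = U' :: A :: B :: C :: D :: T.support := by
    simp [hc2, Walk.support_cons]
  have hc2edges : c2.edges = s(U',A) :: s(A,B) :: s(B,C) :: s(C,D) :: s(D,V') :: T.edges := by
    simp [hc2, Walk.edges_cons]
  have hnotT : ∀ (a b : ↥(scale 2 X)), (a : ℤ × ℤ) ∉ scale 2 Y → s(a,b) ∉ T.edges := by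
    intro a b ha he
    exact ha (hTsup_val a (T.fst_mem_support_of_mem_edges he))
  have hAY : (A : ℤ × ℤ) ∉ scale 2 Y := hnotY _ fA
  have hBY : (B : ℤ × ℤ) ∉ scale 2 Y := hnotY _ fB
  have hCY : (C : ℤ × ℤ) ∉ scale 2 Y := hnotY _ fC
  have hDY : (D : ℤ × ℤ) ∉ scale 2 Y := hnotY _ fD
  have hnotTsup : ∀ (a : ↥(scale 2 X)), (a : ℤ × ℤ) ∉ scale 2 Y → a ∉ T.support := by
    intro a ha h
    exact ha (hTsup_val a h)
  -- counts
  have hcount : ∀ z : ↥(scale 2 X), (A :: B :: C :: D :: T.support).count z = 1 := by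
    intro z
    by_cases hz : (z : ℤ × ℤ) ∈ scale 2 Y
    · have hzA : z ≠ A := fun h => hAY (h ▸ hz)
      have hzB : z ≠ B := fun h => hBY (h ▸ hz)
      have hzC : z ≠ C := fun h => hCY (h ▸ hz)
      have hzD : z ≠ D := fun h => hDY (h ▸ hz)
      rw [List.count_cons_of_ne hzA.symm, List.count_cons_of_ne hzB.symm, List.count_cons_of_ne hzC.symm,
        List.count_cons_of_ne hzD.symm]
      have hzeq : z = ι ⟨(z : ℤ × ℤ), hz⟩ := Subtype.ext rfl
      rw [hTsup, hzeq, List.count_map_of_injective _ _ hInj]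
      convert htcnt ⟨(z : ℤ × ℤ), hz⟩
    · have hzX := scale2_fdiv_mem z.2
      rcases Set.mem_insert_iff.mp hzX with hzp | hzY
      swap
      · exact absurd ((mem_scale2 _).mpr hzY) hz
      have hzT : z ∉ T.support := fun h => hz (hTsup_val z h)
      have hTcnt0 : T.support.count z = 0 := List.count_eq_zero.mpr hzT
      have hcells := cells_covered hd0 (z := (z : ℤ × ℤ)) (by rw [hpq]; exact hzp)
      rcases hcells with hzc | hzc | hzc | hzc
      · have hzsub : z = A := Subtype.ext hzc
        rw [hzsub, List.count_cons_self, List.count_cons_of_ne nAB.symm,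
          List.count_cons_of_ne nAC.symm, List.count_cons_of_ne nAD.symm,
          List.count_eq_zero.mpr (hnotTsup A hAY)]
      · have hzsub : z = B := Subtype.ext hzc
        rw [hzsub, List.count_cons_of_ne nBA.symm, List.count_cons_self,
          List.count_cons_of_ne nBC.symm, List.count_cons_of_ne nBD.symm,
          List.count_eq_zero.mpr (hnotTsup B hBY)]
      · have hzsub : z = C := Subtype.ext hzc
        rw [hzsub, List.count_cons_of_ne nCA.symm, List.count_cons_of_ne nCB.symm,
          List.count_cons_self, List.count_cons_of_ne nCD.symm,
          List.count_eq_zero.mpr (hnotTsup C hCY)]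
      · have hzsub : z = D := Subtype.ext hzc
        rw [hzsub, List.count_cons_of_ne nDA.symm, List.count_cons_of_ne nDB.symm,
          List.count_cons_of_ne nDC.symm, List.count_cons_self,
          List.count_eq_zero.mpr (hnotTsup D hDY)]
  -- the new walk is a cycle
  have hTpath : T.IsPath := Walk.map_isPath_of_injective hInj htp
  have hc2cyc : c2.IsCycle := by
    rw [hc2, Walk.cons_isCycle_iff]
    constructor
    · rw [Walk.cons_isPath_iff, Walk.cons_isPath_iff, Walk.cons_isPath_iff,
        Walk.cons_isPath_iff]
      refine ⟨⟨⟨⟨hTpath, hnotTsup D hDY⟩, ?_⟩, ?_⟩, ?_⟩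
      · simp only [Walk.support_cons, List.mem_cons, not_or]
        exact ⟨nCD, hnotTsup C hCY⟩
      · simp only [Walk.support_cons, List.mem_cons, not_or]
        exact ⟨nBC, nBD, hnotTsup B hBY⟩
      · simp only [Walk.support_cons, List.mem_cons, not_or]
        exact ⟨nAB, nAC, nAD, hnotTsup A hAY⟩
    · simp only [Walk.edges_cons, List.mem_cons, not_or]
      refine ⟨?_, ?_, ?_, ?_, ?_⟩
      · intro h
        rw [Sym2.eq_iff] at h
        rcases h with ⟨h1, -⟩ | ⟨h1, -⟩
        exacts [nUA h1, nUB h1]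
      · intro h
        rw [Sym2.eq_iff] at h
        rcases h with ⟨h1, -⟩ | ⟨h1, -⟩
        exacts [nUB h1, nUC h1]
      · intro h
        rw [Sym2.eq_iff] at h
        rcases h with ⟨h1, -⟩ | ⟨h1, -⟩
        exacts [nUC h1, nUD h1]
      · intro h
        rw [Sym2.eq_iff] at h
        rcases h with ⟨h1, -⟩ | ⟨-, h2⟩
        exacts [nUD h1, nAD h2]
      · intro h
        rw [Sym2.eq_swap] at h
        exact hnotT A U' hAY h
  have hc2ham : c2.IsHamiltonianCycle := by
    rw [Walk.isHamiltonianCycle_iff_isCycle_and_support_count_tail_eq_one]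
    refine ⟨hc2cyc, ?_⟩
    intro z
    rw [hc2sup, List.tail_cons]
    convert hcount z
  -- assemble, with the face property
  refine ⟨U', c2, hc2ham, ?_⟩
  intro x hx d hd hxd
  rw [hc2edges]
  simp only [List.map_cons, List.mem_cons]
  rw [hXdef, Set.mem_insert_iff] at hx
  rcases hx with rfl | hxY
  · -- x = p
    have hdne : d ≠ -d0 := by
      rintro rfl
      apply hxd
      have hqq : x + -d0 = q := by rw [← hpq]; ring
      rw [hqq]
      exact Set.mem_insert_of_mem _ hqY
    have hcase := face_p_cases (q := q) hd0 hd hdne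
    rw [hpq] at hcase
    rcases hcase with h | h | h
    · exact Or.inr (Or.inl (by rw [Sym2.map_pair_eq]; exact h))
    · exact Or.inr (Or.inr (Or.inl (by rw [Sym2.map_pair_eq]; exact h)))
    · exact Or.inr (Or.inr (Or.inr (Or.inl (by rw [Sym2.map_pair_eq]; exact h))))
  · -- x ∈ Y
    have hxdY : x + d ∉ Y := fun h => hxd (Set.mem_insert_of_mem _ h)
    have hxp : x + d ≠ p := fun h => hxd (by rw [h]; exact hpX)
    have hf := hface x hxY d hd hxdY
    have hperm : ((Walk.cons hUVadj t).edges.map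
        (Sym2.map (Subtype.val : ↥(scale 2 Y) → ℤ × ℤ))).Perm
        (w.edges.map (Sym2.map Subtype.val)) := htedges.map _
    have hf' : face x d ∈ (Walk.cons hUVadj t).edges.map (Sym2.map Subtype.val) :=
      hperm.mem_iff.mpr hf
    rw [Walk.edges_cons, List.map_cons, List.mem_cons] at hf'
    rcases hf' with hf' | hf'
    · exfalso
      rw [Sym2.map_pair_eq, hUc, hVc] at hf'
      have hfq : face x d = face q d0 := hf'
      obtain ⟨rfl, rfl⟩ := face_inj hd hd0 hfq
      exact hxp hpq
    · refine Or.inr (Or.inr (Or.inr (Or.inr (Or.inr ?_))))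
      rw [hTedges, List.map_map]
      have hcomp : (Sym2.map (Subtype.val : ↥(scale 2 X) → ℤ × ℤ)) ∘
          (Sym2.map (ι : ↥(scale 2 Y) → ↥(scale 2 X))) =
          Sym2.map (Subtype.val : ↥(scale 2 Y) → ℤ × ℤ) := by
        funext e
        induction e using Sym2.ind with
        | _ a b => rfl
      rw [hcomp]
      exact hf'


lemma cell_mem_scale2 {X : Set (ℤ × ℤ)} {x : ℤ × ℤ} (hx : x ∈ X) {o1 o2 : ℤ}
    (h1 : o1 = 0 ∨ o1 = 1) (h2 : o2 = 0 ∨ o2 = 1) :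
    (2*x.1 + o1, 2*x.2 + o2) ∈ scale 2 X := by
  rw [mem_scale2]
  have e1 : (2*x.1 + o1) / 2 = x.1 := by omega
  have e2 : (2*x.2 + o2) / 2 = x.2 := by omega
  rw [e1, e2]
  exact hx

lemma cell_cases {x z : ℤ × ℤ} (h : (z.1 / 2, z.2 / 2) = x) :
    z = (2*x.1, 2*x.2) ∨ z = (2*x.1+1, 2*x.2) ∨ z = (2*x.1, 2*x.2+1) ∨
      z = (2*x.1+1, 2*x.2+1) := by
  obtain ⟨z1, z2⟩ := z
  obtain ⟨x1, x2⟩ := x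
  simp only [Prod.mk.injEq] at h ⊢
  omega


lemma reachable_transfer {X Y : Set (ℤ × ℤ)} :
    ∀ {a b : ↥X} (w : (fullGridGraph X).Walk a b)
      (_ : ∀ z ∈ w.support, (z : ℤ × ℤ) ∈ Y) (ha : (a : ℤ × ℤ) ∈ Y) (hb : (b : ℤ × ℤ) ∈ Y),
      (fullGridGraph Y).Reachable ⟨a, ha⟩ ⟨b, hb⟩ := by
  intro a b w
  induction w with
  | nil => intro _ ha hb; exact Reachable.refl _
  | @cons a c b h p ih =>
    intro hs ha hb
    have hc : (c : ℤ × ℤ) ∈ Y := hs c (by simp)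
    have hadj : (fullGridGraph Y).Adj ⟨a, ha⟩ ⟨c, hc⟩ := by
      rw [fullGridGraph, SimpleGraph.fromRel_adj] at h
      exact grid_adj h.2
    exact hadj.reachable.trans (ih (fun z hz => hs z (by simp [hz])) hc hb)

lemma exists_noncut {X : Set (ℤ × ℤ)} (hfin : X.Finite) (hX : IsShape X)
    (hcard : ∃ a b : ↥X, a ≠ b) :
    ∃ p ∈ X, (X \ {p}).Nonempty ∧ IsShape (X \ {p}) := by
  haveI := hfin.to_subtype
  obtain ⟨a0, b0, hab⟩ := hcard
  set G := fullGridGraph X with hG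
  have hgr : G.Connected := hX
  set r : ↥X := a0 with hr
  obtain ⟨p, -, hpmax⟩ := Set.exists_max_image Set.univ (fun z : ↥X => G.dist r z)
    Set.finite_univ ⟨r, trivial⟩
  have hpmax : ∀ z : ↥X, G.dist r z ≤ G.dist r p := fun z => hpmax z trivial
  have hrp : r ≠ p := by
    intro h
    have hz : ∀ z : ↥X, z = r := by
      intro z
      have h1 := hpmax z
      rw [← h] at h1
      have h2 : G.dist r r = 0 := SimpleGraph.dist_self
      have h0 : G.dist r z = 0 := by omega
      exact (hgr.dist_eq_zero_iff.mp h0).symm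
    exact hab ((hz a0).trans (hz b0).symm)
  have avoid : ∀ z : ↥X, z ≠ p → ∃ w : G.Walk r z, ∀ y ∈ w.support, y ≠ p := by
    intro z hz
    obtain ⟨w, hw⟩ := hgr.exists_walk_length_eq_dist r z
    refine ⟨w, fun y hy => ?_⟩
    rintro rfl
    have h1 := SimpleGraph.dist_le (w.takeUntil y hy)
    have heq := congrArg Walk.length (w.take_spec hy)
    rw [Walk.length_append] at heq
    have h4 := hpmax z
    have h3 : (w.dropUntil y hy).length = 0 := by omega
    exact hz (Walk.eq_of_length_eq_zero h3).symm
  have hrY : (r : ℤ × ℤ) ∈ X \ {(p : ℤ × ℤ)} := by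
    refine ⟨r.2, ?_⟩
    simp only [Set.mem_singleton_iff]
    exact fun h => hrp (Subtype.ext h)
  have trans : ∀ x : ↥(X \ {(p : ℤ × ℤ)}),
      (fullGridGraph (X \ {(p : ℤ × ℤ)})).Reachable ⟨r, hrY⟩ x := by
    intro x
    have hxX : (x : ℤ × ℤ) ∈ X := x.2.1
    have hxp : (⟨x, hxX⟩ : ↥X) ≠ p := by
      intro h
      exact x.2.2 (congrArg Subtype.val h)
    obtain ⟨w, hwav⟩ := avoid ⟨x, hxX⟩ hxp
    have hsup : ∀ z ∈ w.support, (z : ℤ × ℤ) ∈ X \ {(p : ℤ × ℤ)} := by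
      intro z hz
      refine ⟨z.2, fun h => hwav z hz (Subtype.ext h)⟩
    have := reachable_transfer w hsup hrY x.2
    convert this using 2
  refine ⟨p, p.2, ⟨r, hrY⟩, ?_⟩
  rw [IsShape, SimpleGraph.connected_iff]
  exact ⟨fun x y => (trans x).symm.trans (trans y), ⟨⟨r, hrY⟩⟩⟩


lemma base (x : ℤ × ℤ) : Good {x} := by
  obtain ⟨a, b⟩ := x
  have hm : ∀ o1 o2 : ℤ, (o1 = 0 ∨ o1 = 1) → (o2 = 0 ∨ o2 = 1) →
      (2*a + o1, 2*b + o2) ∈ scale 2 ({(a, b)} : Set (ℤ × ℤ)) := by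
    intro o1 o2 h1 h2
    exact cell_mem_scale2 (X := {(a,b)}) (Set.mem_singleton _) h1 h2
  set v00 : ↥(scale 2 ({(a,b)} : Set (ℤ×ℤ))) := ⟨(2*a, 2*b), by simpa using hm 0 0 (Or.inl rfl) (Or.inl rfl)⟩ with hv00
  set v10 : ↥(scale 2 ({(a,b)} : Set (ℤ×ℤ))) := ⟨(2*a+1, 2*b), by simpa using hm 1 0 (Or.inr rfl) (Or.inl rfl)⟩ with hv10
  set v11 : ↥(scale 2 ({(a,b)} : Set (ℤ×ℤ))) := ⟨(2*a+1, 2*b+1), by simpa using hm 1 1 (Or.inr rfl) (Or.inr rfl)⟩ with hv11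
  set v01 : ↥(scale 2 ({(a,b)} : Set (ℤ×ℤ))) := ⟨(2*a, 2*b+1), by simpa using hm 0 1 (Or.inl rfl) (Or.inr rfl)⟩ with hv01
  have h1 : (fullGridGraph _).Adj v00 v10 := grid_adj (Or.inr (by simp [mem_unitVectors, Prod.ext_iff, v00, v10, v11, v01]))
  have h2 : (fullGridGraph _).Adj v10 v11 := grid_adj (Or.inr (by simp [mem_unitVectors, Prod.ext_iff, v00, v10, v11, v01]))
  have h3 : (fullGridGraph _).Adj v11 v01 := grid_adj (Or.inl (by simp [mem_unitVectors, Prod.ext_iff, v00, v10, v11, v01]))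
  have h4 : (fullGridGraph _).Adj v01 v00 := grid_adj (Or.inl (by simp [mem_unitVectors, Prod.ext_iff, v00, v10, v11, v01]))
  refine ⟨v00, Walk.cons h1 (Walk.cons h2 (Walk.cons h3 (Walk.cons h4 Walk.nil))), ?_, ?_⟩
  · rw [isHamiltonianCycle_iff_isCycle_and_support_count_tail_eq_one]
    constructor
    · refine ⟨⟨?_, by simp⟩, ?_⟩
      · simp only [Walk.isTrail_def, Walk.edges_cons, Walk.edges_nil]
        simp [List.nodup_cons, Sym2.eq_iff, Subtype.ext_iff, Prod.ext_iff, v00, v10, v11, v01]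
      · simp only [Walk.support_cons, Walk.support_nil, List.tail_cons]
        simp [List.nodup_cons, Subtype.ext_iff, Prod.ext_iff, v00, v10, v11, v01]
    · intro z
      obtain ⟨zv, hzm⟩ := z
      have hz' : (zv.1/2, zv.2/2) = (a, b) := scale2_fdiv_mem (X := {(a,b)}) hzm
      have hz := cell_cases hz'
      simp only [Walk.support_cons, Walk.support_nil, List.tail_cons]
      rcases hz with rfl | rfl | rfl | rfl <;>
      · simp [List.count_cons, Subtype.mk.injEq, Prod.mk.injEq, v00, v10, v11, v01]
        try omega
  · rintro y (rfl : y = (a,b)) d hd -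
    rw [mem_unitVectors] at hd
    simp only [Walk.edges_cons, Walk.edges_nil, List.map_cons, List.map_nil]
    rcases hd with rfl | rfl | rfl | rfl <;>
      simp [face, faceL, faceR, Sym2.map_pair_eq, Sym2.eq_iff, Prod.ext_iff, v00, v10, v11, v01]


lemma exists_adj_of_walk {α : Type*} {G : SimpleGraph α} {a b : α} (wk : G.Walk a b)
    (hab : a ≠ b) : ∃ y, G.Adj a y := by
  cases wk with
  | nil => exact absurd rfl hab
  | cons h _ => exact ⟨_, h⟩

lemma good_all : ∀ (n : ℕ) (X : Set (ℤ × ℤ)) (hfin : X.Finite),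
    hfin.toFinset.card = n → X.Nonempty → IsShape X → Good X := by
  intro n
  induction n using Nat.strong_induction_on with
  | _ n ih =>
    intro X hfin hcard hne hX
    by_cases h1 : ∃ a b : ↥X, a ≠ b
    · obtain ⟨p, hpX, hYne, hYsh⟩ := exists_noncut hfin hX h1
      obtain ⟨z, hzY⟩ := hYne
      have hzX : z ∈ X := hzY.1
      have hzp : (⟨p, hpX⟩ : ↥X) ≠ ⟨z, hzX⟩ := by
        intro h
        exact hzY.2 (congrArg Subtype.val h).symm
      obtain ⟨wk⟩ := hX.preconnected ⟨p, hpX⟩ ⟨z, hzX⟩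
      obtain ⟨y, hadj⟩ := exists_adj_of_walk wk hzp
      rw [fullGridGraph, SimpleGraph.fromRel_adj] at hadj
      obtain ⟨hne', hrel⟩ := hadj
      have hd0 : p - (y : ℤ × ℤ) ∈ unitVectors := by
        rcases hrel with h | h
        · exact h
        · have := neg_mem_unitVectors h
          rwa [neg_sub] at this
      have hqp : (y : ℤ × ℤ) ≠ p := fun h => hne' (Subtype.ext h.symm)
      have hqY : (y : ℤ × ℤ) ∈ X \ {p} := ⟨y.2, hqp⟩
      have hpY : p ∉ X \ {p} := fun h => h.2 rfl
      have hYfin : (X \ {p}).Finite := hfin.subset Set.diff_subset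
      have hlt : hYfin.toFinset.card < n := by
        rw [← hcard]
        apply Finset.card_lt_card
        rw [Set.Finite.toFinset_ssubset_toFinset]
        exact Set.sdiff_singleton_ssubset.mpr hpX
      have hGY : Good (X \ {p}) := ih _ hlt (X \ {p}) hYfin rfl ⟨z, hzY⟩ hYsh
      have hstep := step hqY hpY hd0 hGY
      rwa [Set.insert_diff_singleton, Set.insert_eq_self.mpr hpX] at hstep
    · obtain ⟨x, hx⟩ := hne
      have hX1 : X = {x} := by
        apply Set.eq_singleton_iff_unique_mem.mpr
        refine ⟨hx, fun y hy => ?_⟩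
        by_contra hne'
        exact h1 ⟨⟨y, hy⟩, ⟨x, hx⟩, fun hh => hne' (congrArg Subtype.val hh)⟩
      rw [hX1]
      exact base x

end GridHam

/-- For every nonempty finite shape `X ⊆ ℤ²`, the full grid graph on the
2-scaling `X²` of `X` contains a Hamiltonian cycle. -/
theorem stmt_0 (X : Set (ℤ × ℤ)) (hfin : X.Finite) (hne : X.Nonempty)
    (hX : IsShape X) :
    ∃ (v : scale 2 X) (w : (fullGridGraph (scale 2 X)).Walk v v),
      w.IsHamiltonianCycle := by
  obtain ⟨v, w, hw, -⟩ := GridHam.good_all _ X hfin rfl hne hX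
  exact ⟨v, w, hw⟩
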